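/- Let A be an m×l real matrix and B an l×n real matrix whose column sums are all equal to some constant b (B is of type b). Then var(AB) ≤ var(A)·var(B). -/

import Mathlib

open Matrix Filter Topology

/-- The column variation of a real matrix: half the maximum ℓ¹-distance
between two columns. -/
noncomputable def var {m n : ℕ} (A : Matrix (Fin m) (Fin n) ℝ) : ℝ :=
  (1/2) * ⨆ j : Fin n, ⨆ k : Fin n, ∑ i, |A i j - A i k|

lemma var_nonneg' {m n : ℕ} (A : Matrix (Fin m) (Fin n) ℝ) : 0 ≤ var A := by
  have h : 0 ≤ ⨆ j : Fin n, ⨆ k : Fin n, ∑ i, |A i j - A i k| :=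
    Real.iSup_nonneg fun j => Real.iSup_nonneg fun k =>
      Finset.sum_nonneg fun i _ => abs_nonneg _
  unfold var; linarith

lemma colsum_le_two_var {m n : ℕ} (A : Matrix (Fin m) (Fin n) ℝ) (j k : Fin n) :
    ∑ i, |A i j - A i k| ≤ 2 * var A := by
  have h1 : ∑ i, |A i j - A i k| ≤ ⨆ k' : Fin n, ∑ i, |A i j - A i k'| :=
    le_ciSup (f := fun k' : Fin n => ∑ i, |A i j - A i k'|)
      (Set.Finite.bddAbove (Set.finite_range _)) k
  have h2 : (⨆ k' : Fin n, ∑ i, |A i j - A i k'|) ≤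
      ⨆ j' : Fin n, ⨆ k' : Fin n, ∑ i, |A i j' - A i k'| :=
    le_ciSup (f := fun j' : Fin n => ⨆ k' : Fin n, ∑ i, |A i j' - A i k'|)
      (Set.Finite.bddAbove (Set.finite_range _)) j
  unfold var; linarith

lemma key_bound {m l : ℕ} (A : Matrix (Fin m) (Fin l) ℝ) (d : Fin l → ℝ)
    (hd : ∑ i, d i = 0) :
    ∑ r, |∑ i, A r i * d i| ≤ var A * ∑ i, |d i| := by
  set p : Fin l → ℝ := fun i => max (d i) 0 with hp
  set q : Fin l → ℝ := fun i => max (-d i) 0 with hq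
  have hpq : ∀ i, p i - q i = d i := fun i => max_zero_sub_max_neg_zero_eq_self (d i)
  have habs : ∀ i, p i + q i = |d i| := fun i => by
    rw [hp, hq]; simp [max_zero_add_max_neg_zero_eq_abs_self]
  have hpn : ∀ i, 0 ≤ p i := fun i => le_max_right _ _
  have hqn : ∀ i, 0 ≤ q i := fun i => le_max_right _ _
  set s := ∑ i, p i with hs
  have hsq : ∑ i, q i = s := by
    have h0 : ∑ i, (p i - q i) = 0 := by
      rw [Finset.sum_congr rfl fun i _ => hpq i, hd]
    rw [Finset.sum_sub_distrib] at h0; linarith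
  have hsn : 0 ≤ s := Finset.sum_nonneg fun i _ => hpn i
  have habs_sum : ∑ i, |d i| = 2 * s := by
    have h0 : ∑ i, (p i + q i) = ∑ i, |d i| :=
      Finset.sum_congr rfl fun i _ => habs i
    rw [Finset.sum_add_distrib, hsq] at h0; linarith
  rcases eq_or_lt_of_le hsn with h0 | hs_pos
  · have hp0 : ∀ i ∈ Finset.univ, p i = 0 :=
      (Finset.sum_eq_zero_iff_of_nonneg (fun i _ => hpn i)).1 h0.symm
    have hq0 : ∀ i ∈ Finset.univ, q i = 0 :=
      (Finset.sum_eq_zero_iff_of_nonneg (fun i _ => hqn i)).1 (by rw [hsq, ← h0])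
    have hd0 : ∀ i, d i = 0 := fun i => by
      rw [← hpq i, hp0 i (Finset.mem_univ i), hq0 i (Finset.mem_univ i)]; ring
    simp [hd0]
  · have hsne : s ≠ 0 := ne_of_gt hs_pos
    have hrow : ∀ r, ∑ i, A r i * d i =
        (1/s) * ∑ i, ∑ i', p i * q i' * (A r i - A r i') := by
      intro r
      have t1 : ∑ i, ∑ i', p i * q i' * A r i
          = (∑ i, p i * A r i) * (∑ i', q i') := by
        rw [Finset.sum_mul_sum]
        exact Finset.sum_congr rfl fun i _ =>
          Finset.sum_congr rfl fun i' _ => by ring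
      have t2 : ∑ i, ∑ i', p i * q i' * A r i'
          = (∑ i, p i) * (∑ i', q i' * A r i') := by
        rw [Finset.sum_mul_sum]
        exact Finset.sum_congr rfl fun i _ =>
          Finset.sum_congr rfl fun i' _ => by ring
      have e1 : ∑ i, ∑ i', p i * q i' * (A r i - A r i')
          = (∑ i, p i * A r i) * s - s * (∑ i', q i' * A r i') := by
        have : ∀ i, ∑ i', p i * q i' * (A r i - A r i')
            = ∑ i', (p i * q i' * A r i) - ∑ i', (p i * q i' * A r i') := by
          intro i
          rw [← Finset.sum_sub_distrib]
          exact Finset.sum_congr rfl fun i' _ => by ring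
        rw [Finset.sum_congr rfl fun i _ => this i, Finset.sum_sub_distrib,
          t1, t2, hsq, ← hs]
      have e2 : ∑ i, A r i * d i
          = (∑ i, p i * A r i) - (∑ i, q i * A r i) := by
        rw [← Finset.sum_sub_distrib]
        refine Finset.sum_congr rfl fun i _ => ?_
        rw [← hpq i]; ring
      rw [e1, e2]
      field_simp
    calc ∑ r, |∑ i, A r i * d i|
        = ∑ r, |(1/s) * ∑ i, ∑ i', p i * q i' * (A r i - A r i')| :=
          Finset.sum_congr rfl fun r _ => by rw [hrow r]
      _ ≤ ∑ r, (1/s) * ∑ i, ∑ i', p i * q i' * |A r i - A r i'| := by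
          refine Finset.sum_le_sum fun r _ => ?_
          rw [abs_mul, abs_of_nonneg (by positivity : (0:ℝ) ≤ 1/s)]
          refine mul_le_mul_of_nonneg_left ?_ (by positivity)
          calc |∑ i, ∑ i', p i * q i' * (A r i - A r i')|
              ≤ ∑ i, |∑ i', p i * q i' * (A r i - A r i')| :=
                Finset.abs_sum_le_sum_abs _ _
            _ ≤ ∑ i, ∑ i', p i * q i' * |A r i - A r i'| := by
                refine Finset.sum_le_sum fun i _ => ?_
                calc |∑ i', p i * q i' * (A r i - A r i')|
                    ≤ ∑ i', |p i * q i' * (A r i - A r i')| :=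
                      Finset.abs_sum_le_sum_abs _ _
                  _ = ∑ i', p i * q i' * |A r i - A r i'| := by
                      refine Finset.sum_congr rfl fun i' _ => ?_
                      rw [abs_mul, abs_of_nonneg (mul_nonneg (hpn i) (hqn i'))]
      _ = (1/s) * ∑ i, ∑ i', p i * q i' * (∑ r, |A r i - A r i'|) := by
          rw [← Finset.mul_sum]
          congr 1
          rw [Finset.sum_comm]
          refine Finset.sum_congr rfl fun i _ => ?_
          rw [Finset.sum_comm]
          exact Finset.sum_congr rfl fun i' _ => by rw [Finset.mul_sum]
      _ ≤ (1/s) * ∑ i, ∑ i', p i * q i' * (2 * var A) := by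
          refine mul_le_mul_of_nonneg_left ?_ (by positivity)
          refine Finset.sum_le_sum fun i _ => Finset.sum_le_sum fun i' _ => ?_
          exact mul_le_mul_of_nonneg_left (colsum_le_two_var A i i')
            (mul_nonneg (hpn i) (hqn i'))
      _ = (1/s) * (s * (s * (2 * var A))) := by
          congr 1
          calc ∑ i, ∑ i', p i * q i' * (2 * var A)
              = ∑ i, p i * ∑ i', q i' * (2 * var A) := by
                refine Finset.sum_congr rfl fun i _ => ?_
                rw [Finset.mul_sum]
                exact Finset.sum_congr rfl fun i' _ => by ring
            _ = (∑ i, p i) * ∑ i', q i' * (2 * var A) := by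
                rw [← Finset.sum_mul]
            _ = s * (s * (2 * var A)) := by
                rw [← hs, ← Finset.sum_mul, hsq]
      _ = var A * ∑ i, |d i| := by
          rw [habs_sum]; field_simp

theorem stmt1 {m l n : ℕ} (A : Matrix (Fin m) (Fin l) ℝ)
    (B : Matrix (Fin l) (Fin n) ℝ) (b : ℝ)
    (hB : ∀ k, ∑ i, B i k = b) :
    var (A * B) ≤ var A * var B := by
  have hvA := var_nonneg' A
  have hvB := var_nonneg' B
  have hcol : ∀ j k : Fin n,
      ∑ r, |(A * B) r j - (A * B) r k| ≤ 2 * (var A * var B) := by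
    intro j k
    have hd : ∑ i, (B i j - B i k) = 0 := by
      rw [Finset.sum_sub_distrib, hB j, hB k]; ring
    have h1 := key_bound A (fun i => B i j - B i k) hd
    have h2 : ∑ i, |B i j - B i k| ≤ 2 * var B := colsum_le_two_var B j k
    calc ∑ r, |(A * B) r j - (A * B) r k|
        = ∑ r, |∑ i, A r i * (B i j - B i k)| := by
          refine Finset.sum_congr rfl fun r _ => ?_
          congr 1
          simp [Matrix.mul_apply, mul_sub, Finset.sum_sub_distrib]
      _ ≤ var A * ∑ i, |B i j - B i k| := h1
      _ ≤ var A * (2 * var B) := mul_le_mul_of_nonneg_left h2 hvA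
      _ = 2 * (var A * var B) := by ring
  have hsup : (⨆ j : Fin n, ⨆ k : Fin n, ∑ r, |(A * B) r j - (A * B) r k|)
      ≤ 2 * (var A * var B) :=
    Real.iSup_le (fun j => Real.iSup_le (fun k => hcol j k)
      (by nlinarith)) (by nlinarith)
  have hAB : var (A * B) = (1/2) *
      ⨆ j : Fin n, ⨆ k : Fin n, ∑ r, |(A * B) r j - (A * B) r k| := rfl
  linarith
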